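/- Let β ∈ ℝ \ {0} and suppose (ξ, c) with ξ ≠ 0 and cos(c) ≠ 0 satisfies β·ξ·cos(c) = sin(c) - sin(ξ + c) and β·ξ²·sin(ξ + c) = ξ·cos(ξ + c) - ξ·cos(c). Then β²ξ² - 2·tan(c)·β·ξ + (tan²(c) - 1) = 0, and hence β·ξ = tan(c) + 1 or β·ξ = tan(c) - 1. -/

import Mathlib

open Real

theorem quadratic_in_beta_xi (β ξ c : ℝ) (hβ : β ≠ 0) (hξ : ξ ≠ 0)
    (hc : Real.cos c ≠ 0)
    (h1 : β * ξ * Real.cos c = Real.sin c - Real.sin (ξ + c))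
    (h2 : β * ξ^2 * Real.sin (ξ + c) = ξ * Real.cos (ξ + c) - ξ * Real.cos c) :
    β^2 * ξ^2 - 2 * Real.tan c * β * ξ + (Real.tan c ^ 2 - 1) = 0 ∧
      (β * ξ = Real.tan c + 1 ∨ β * ξ = Real.tan c - 1) := by
  have hs : Real.sin (ξ + c) = Real.sin c - β * ξ * Real.cos c := by linarith
  have h2' : β * ξ * Real.sin (ξ + c) = Real.cos (ξ + c) - Real.cos c := by
    apply mul_left_cancel₀ hξ
    ring_nf
    ring_nf at h2
    linarith
  have hcos : Real.cos (ξ + c) = Real.cos c + β * ξ * (Real.sin c - β * ξ * Real.cos c) := by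
    rw [← hs]; linarith
  have pyth := Real.sin_sq_add_cos_sq (ξ + c)
  have pyth2 := Real.sin_sq_add_cos_sq c
  rw [hs, hcos] at pyth
  have hβξ : β * ξ ≠ 0 := mul_ne_zero hβ hξ
  have key : (β * ξ)^2 * Real.cos c ^ 2 - 2 * (β * ξ) * Real.sin c * Real.cos c
      + Real.sin c ^ 2 - Real.cos c ^ 2 = 0 := by
    have h0 : (β * ξ)^2 * ((β * ξ)^2 * Real.cos c ^ 2 - 2 * (β * ξ) * Real.sin c * Real.cos c
        + Real.sin c ^ 2 - Real.cos c ^ 2) = 0 := by nlinarith [pyth, pyth2]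
    exact (mul_eq_zero.mp h0).resolve_left (pow_ne_zero 2 hβξ)
  have key2 : β^2 * ξ^2 - 2 * Real.tan c * β * ξ + (Real.tan c ^ 2 - 1) = 0 := by
    rw [Real.tan_eq_sin_div_cos]
    field_simp
    linear_combination key
  refine ⟨key2, ?_⟩
  have hsq : (β * ξ - Real.tan c) * (β * ξ - Real.tan c) = 1 := by nlinarith [key2]
  rcases mul_self_eq_one_iff.mp hsq with h | h
  · left; linarith
  · right; linarith
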